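/- Let (X_i)_{i≥0} be a stationary sequence of E-valued random variables and φ : E → ℝ measurable with φ(X_0) ∈ L^4. Then for every n ≥ 1: E[(Σ_{i=1}^n φ(X_i))^4] ≤ 4!·n·Σ_{i,j,k ≥ 0, i+j+k ≤ n} |E[φ(X_0)·φ(X_i)·φ(X_{i+j})·φ(X_{i+j+k})]|. -/

import Mathlib

open MeasureTheory Filter Finset

-- generic counting lemma 1: sum over a surjective image
lemma aux_sum_le_of_surj {α β : Type*} [DecidableEq β] (f : α → β) (t : Finset α)
    (s : Finset β) (F : β → ℝ) (hF : ∀ b, 0 ≤ F b)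
    (hsurj : ∀ b ∈ s, ∃ a ∈ t, f a = b) :
    ∑ b ∈ s, F b ≤ ∑ a ∈ t, F (f a) := by
  have hsub : s ⊆ t.image f := fun b hb => by
    obtain ⟨a, ha, rfl⟩ := hsurj b hb; exact Finset.mem_image_of_mem f ha
  calc ∑ b ∈ s, F b ≤ ∑ b ∈ t.image f, F b :=
        Finset.sum_le_sum_of_subset_of_nonneg hsub (fun b _ _ => hF b)
    _ ≤ ∑ b ∈ t.image f, #{a ∈ t | f a = b} • F b := by
        apply Finset.sum_le_sum
        intro b hb
        obtain ⟨a, ha, rfl⟩ := Finset.mem_image.mp hb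
        have h1 : 1 ≤ #{a' ∈ t | f a' = f a} :=
          Finset.card_pos.mpr ⟨a, Finset.mem_filter.mpr ⟨ha, rfl⟩⟩
        rw [nsmul_eq_mul]
        nlinarith [hF (f a), (Nat.one_le_cast (α := ℝ)).mpr h1]
    _ = ∑ a ∈ t, F (f a) := (Finset.sum_comp F f).symm

-- generic counting lemma 2: fibers of size at most n
lemma aux_sum_comp_le {α β : Type*} [DecidableEq β] (f : α → β) (t : Finset α)
    (s : Finset β) (F : β → ℝ) (hF : ∀ b, 0 ≤ F b) (n : ℕ)
    (hmaps : ∀ a ∈ t, f a ∈ s)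
    (hcard : ∀ b, #{a ∈ t | f a = b} ≤ n) :
    ∑ a ∈ t, F (f a) ≤ n * ∑ b ∈ s, F b := by
  rw [Finset.sum_comp, Finset.mul_sum]
  calc ∑ b ∈ t.image f, #{a ∈ t | f a = b} • F b
      ≤ ∑ b ∈ t.image f, n * F b := by
        apply Finset.sum_le_sum; intro b _
        rw [nsmul_eq_mul]
        exact mul_le_mul_of_nonneg_right (by exact_mod_cast hcard b) (hF b)
    _ ≤ ∑ b ∈ s, n * F b :=
        Finset.sum_le_sum_of_subset_of_nonneg
          (Finset.image_subset_iff.mpr hmaps)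
          (fun b _ _ => mul_nonneg (Nat.cast_nonneg n) (hF b))

section shift

variable {E : Type*} [MeasurableSpace E] {Ω : Type*} [MeasurableSpace Ω]
    (μ : Measure Ω) (X : ℕ → Ω → E)

-- stationarity for 4-fold products
lemma aux_shift (hXmeas : ∀ n, Measurable (X n))
    (hStat : ∀ m : ℕ, Measure.map (fun ω => fun i => X (i + m) ω) μ
      = Measure.map (fun ω => fun i => X i ω) μ)
    (φ : E → ℝ) (hφmeas : Measurable φ) (m a b c d : ℕ) :
    ∫ ω, φ (X (a + m) ω) * φ (X (b + m) ω) * φ (X (c + m) ω) * φ (X (d + m) ω) ∂μ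
      = ∫ ω, φ (X a ω) * φ (X b ω) * φ (X c ω) * φ (X d ω) ∂μ := by
  have hT : ∀ k : ℕ, Measurable (fun ω => fun i => X (i + k) ω) :=
    fun k => measurable_pi_lambda _ fun i => hXmeas (i + k)
  have hT0 : Measurable (fun ω => fun i : ℕ => X i ω) :=
    measurable_pi_lambda _ fun i => hXmeas i
  have hGmeas : Measurable (fun y : ℕ → E => φ (y a) * φ (y b) * φ (y c) * φ (y d)) :=
    (((hφmeas.comp (measurable_pi_apply a)).mul
      (hφmeas.comp (measurable_pi_apply b))).mul
      (hφmeas.comp (measurable_pi_apply c))).mul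
      (hφmeas.comp (measurable_pi_apply d))
  calc ∫ ω, φ (X (a + m) ω) * φ (X (b + m) ω) * φ (X (c + m) ω) * φ (X (d + m) ω) ∂μ
      = ∫ y, φ (y a) * φ (y b) * φ (y c) * φ (y d)
          ∂(Measure.map (fun ω => fun i => X (i + m) ω) μ) :=
        (integral_map (hT m).aemeasurable hGmeas.aestronglyMeasurable).symm
    _ = ∫ y, φ (y a) * φ (y b) * φ (y c) * φ (y d)
          ∂(Measure.map (fun ω => fun i => X i ω) μ) := by rw [hStat m]
    _ = ∫ ω, φ (X a ω) * φ (X b ω) * φ (X c ω) * φ (X d ω) ∂μ :=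
        integral_map hT0.aemeasurable hGmeas.aestronglyMeasurable

-- Memℒp is preserved by the shift
lemma aux_memLp (hXmeas : ∀ n, Measurable (X n))
    (hStat : ∀ m : ℕ, Measure.map (fun ω => fun i => X (i + m) ω) μ
      = Measure.map (fun ω => fun i => X i ω) μ)
    (φ : E → ℝ) (hφmeas : Measurable φ)
    (hφ4 : MemLp (fun ω => φ (X 0 ω)) 4 μ) (m : ℕ) :
    MemLp (fun ω => φ (X m ω)) 4 μ := by
  have hT : Measurable (fun ω => fun i : ℕ => X (i + m) ω) :=
    measurable_pi_lambda _ fun i => hXmeas (i + m)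
  have hT0 : Measurable (fun ω => fun i : ℕ => X i ω) :=
    measurable_pi_lambda _ fun i => hXmeas i
  have hg : Measurable (fun y : ℕ → E => φ (y 0)) :=
    hφmeas.comp (measurable_pi_apply 0)
  have h1 : MemLp (fun y : ℕ → E => φ (y 0)) 4
      (Measure.map (fun ω => fun i => X i ω) μ) :=
    (memLp_map_measure_iff hg.aestronglyMeasurable hT0.aemeasurable).mpr hφ4
  rw [← hStat m] at h1
  have h2 := (memLp_map_measure_iff hg.aestronglyMeasurable hT.aemeasurable).mp h1
  have heq : (fun ω => φ (X m ω))
      = (fun y : ℕ → E => φ (y 0)) ∘ (fun ω => fun i => X (i + m) ω) := by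
    funext ω; simp [Function.comp, Nat.zero_add]
  rw [heq]; exact h2

end shift

theorem stmt_4
    {E : Type*} [MeasurableSpace E]
    {Ω : Type*} [MeasurableSpace Ω]
    (μ : Measure Ω) [IsProbabilityMeasure μ]
    (X : ℕ → Ω → E)
    (hXmeas : ∀ n, Measurable (X n))
    (hStat : ∀ m : ℕ, Measure.map (fun ω => fun i => X (i + m) ω) μ
      = Measure.map (fun ω => fun i => X i ω) μ)
    (φ : E → ℝ) (hφmeas : Measurable φ)
    (hφ4 : MemLp (fun ω => φ (X 0 ω)) 4 μ)
    (n : ℕ) (hn : 1 ≤ n) :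
    ∫ ω, (∑ i ∈ Finset.Icc 1 n, φ (X i ω)) ^ 4 ∂μ ≤
      (24 : ℝ) * n * ∑ i ∈ Finset.range (n + 1), ∑ j ∈ Finset.range (n + 1),
        ∑ k ∈ Finset.range (n + 1),
          (if i + j + k ≤ n then
            |∫ ω, φ (X 0 ω) * φ (X i ω) * φ (X (i + j) ω) * φ (X (i + j + k) ω) ∂μ|
          else 0) := by
  classical
  have hY4 : ∀ m, MemLp (fun ω => φ (X m ω)) 4 μ :=
    aux_memLp μ X hXmeas hStat φ hφmeas hφ4
  -- integrability of 4-fold products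
  have hInt : ∀ a b c d : ℕ,
      Integrable (fun ω => φ (X a ω) * φ (X b ω) * φ (X c ω) * φ (X d ω)) μ := by
    intro a b c d
    have h2 : (1 : ENNReal) / 2 = 1 / 4 + 1 / 4 := by
      simp only [one_div]
      have : ((4:ENNReal))⁻¹ + 4⁻¹ = 2 * 4⁻¹ := (two_mul _).symm
      rw [this, show (4:ENNReal) = 2 * 2 by norm_num,
        ENNReal.mul_inv (by norm_num) (by norm_num), ← mul_assoc,
        ENNReal.mul_inv_cancel (by norm_num) (by norm_num), one_mul]
    have h1 : (1 : ENNReal) / 1 = 1 / 2 + 1 / 2 := by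
      simp only [one_div]
      rw [inv_one]
      exact ENNReal.inv_two_add_inv_two.symm
    have hab : MemLp (fun ω => φ (X a ω) * φ (X b ω)) 2 μ :=
      by haveI : ENNReal.HolderTriple 4 4 2 := ⟨by simpa [one_div] using h2.symm⟩
         exact (hY4 b).smul (hY4 a)
    have hcd : MemLp (fun ω => φ (X c ω) * φ (X d ω)) 2 μ :=
      by haveI : ENNReal.HolderTriple 4 4 2 := ⟨by simpa [one_div] using h2.symm⟩
         exact (hY4 d).smul (hY4 c)
    have habcd : MemLp
        (fun ω => (φ (X a ω) * φ (X b ω)) * (φ (X c ω) * φ (X d ω))) 1 μ :=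
      by haveI : ENNReal.HolderTriple 2 2 1 := ⟨by simpa [one_div] using h1.symm⟩
         exact hcd.smul hab
    have := memLp_one_iff_integrable.mp habcd
    refine this.congr (Filter.Eventually.of_forall fun ω => ?_)
    ring
  -- notation
  set P : Finset (Fin 4 → ℕ) := Fintype.piFinset (fun _ : Fin 4 => Finset.Icc 1 n) with hPdef
  set F : (Fin 4 → ℕ) → ℝ := fun p => |∫ ω, ∏ i, φ (X (p i) ω) ∂μ| with hFdef
  set Q : Finset (Fin 4 → ℕ) := P.filter (fun q => Monotone q) with hQdef
  set gp : (Fin 4 → ℕ) → ℕ × ℕ × ℕ :=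
    fun q => (q 1 - q 0, q 2 - q 1, q 3 - q 2) with hgpdef
  set G : ℕ × ℕ × ℕ → ℝ := fun v =>
    |∫ ω, φ (X 0 ω) * φ (X v.1 ω) * φ (X (v.1 + v.2.1) ω)
      * φ (X (v.1 + v.2.1 + v.2.2) ω) ∂μ| with hGdef
  set T : Finset (ℕ × ℕ × ℕ) :=
    (Finset.range (n+1) ×ˢ (Finset.range (n+1) ×ˢ Finset.range (n+1))).filter
      (fun v => v.1 + v.2.1 + v.2.2 ≤ n) with hTdef
  have hIntP : ∀ p : Fin 4 → ℕ, Integrable (fun ω => ∏ i, φ (X (p i) ω)) μ := by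
    intro p
    refine (hInt (p 0) (p 1) (p 2) (p 3)).congr (Filter.Eventually.of_forall fun ω => ?_)
    exact (Fin.prod_univ_four fun i => φ (X (p i) ω)).symm
  have step1 : ∫ ω, (∑ i ∈ Finset.Icc 1 n, φ (X i ω)) ^ 4 ∂μ
      = ∑ p ∈ P, ∫ ω, ∏ i, φ (X (p i) ω) ∂μ := by
    rw [← integral_finset_sum P (fun p _ => hIntP p)]
    apply integral_congr_ae
    refine Filter.Eventually.of_forall fun ω => ?_
    calc (∑ i ∈ Finset.Icc 1 n, φ (X i ω)) ^ 4
        = ∏ _i : Fin 4, (∑ j ∈ Finset.Icc 1 n, φ (X j ω)) := by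
          rw [Finset.prod_const]; simp
      _ = ∑ p ∈ P, ∏ i, φ (X (p i) ω) := Finset.prod_univ_sum _ _
  have step2 : ∑ p ∈ P, ∫ ω, ∏ i, φ (X (p i) ω) ∂μ ≤ ∑ p ∈ P, F p :=
    Finset.sum_le_sum fun p _ => le_abs_self _
  have hFsymm : ∀ (q : Fin 4 → ℕ) (σ : Equiv.Perm (Fin 4)), F (q ∘ σ) = F q := by
    intro q σ
    simp only [hFdef]
    congr 1
    apply integral_congr_ae
    refine Filter.Eventually.of_forall fun ω => ?_
    exact Equiv.prod_comp σ (fun i => φ (X (q i) ω))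
  have step3 : ∑ p ∈ P, F p ≤ 24 * ∑ q ∈ Q, F q := by
    have hsurj : ∀ p ∈ P, ∃ x ∈ (Finset.univ : Finset (Equiv.Perm (Fin 4))) ×ˢ Q,
        x.2 ∘ x.1 = p := by
      intro p hp
      refine ⟨((Tuple.sort p)⁻¹, p ∘ Tuple.sort p), ?_, ?_⟩
      · refine Finset.mem_product.mpr ⟨Finset.mem_univ _, Finset.mem_filter.mpr
          ⟨?_, Tuple.monotone_sort p⟩⟩
        rw [Fintype.mem_piFinset] at hp ⊢
        intro i; exact hp _
      · funext i
        simp [Function.comp]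
    have h := aux_sum_le_of_surj (fun x : Equiv.Perm (Fin 4) × (Fin 4 → ℕ) => x.2 ∘ x.1)
      (Finset.univ ×ˢ Q) P F (fun _ => abs_nonneg _) hsurj
    calc ∑ p ∈ P, F p ≤ ∑ x ∈ (Finset.univ : Finset (Equiv.Perm (Fin 4))) ×ˢ Q,
          F (x.2 ∘ x.1) := h
      _ = ∑ σ : Equiv.Perm (Fin 4), ∑ q ∈ Q, F (q ∘ σ) := Finset.sum_product _ _ _
      _ = ∑ _σ : Equiv.Perm (Fin 4), ∑ q ∈ Q, F q := by
          refine Finset.sum_congr rfl fun σ _ => Finset.sum_congr rfl fun q _ => hFsymm q σ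
      _ = 24 * ∑ q ∈ Q, F q := by
          rw [Finset.sum_const, Finset.card_univ, nsmul_eq_mul]
          norm_num [Fintype.card_perm, Nat.factorial]
  have step4 : ∀ q ∈ Q, F q = G (gp q) := by
    intro q hq
    obtain ⟨hqP, hmono⟩ := Finset.mem_filter.mp hq
    have h01 : q 0 ≤ q 1 := hmono (by decide)
    have h12 : q 1 ≤ q 2 := hmono (by decide)
    have h23 : q 2 ≤ q 3 := hmono (by decide)
    have hF : F q = |∫ ω, φ (X (0 + q 0) ω) * φ (X ((q 1 - q 0) + q 0) ω)
        * φ (X (((q 1 - q 0) + (q 2 - q 1)) + q 0) ω)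
        * φ (X (((q 1 - q 0) + (q 2 - q 1) + (q 3 - q 2)) + q 0) ω) ∂μ| := by
      simp only [hFdef]
      congr 1
      apply integral_congr_ae
      refine Filter.Eventually.of_forall fun ω => ?_
      simp only [Fin.prod_univ_four]
      rw [show 0 + q 0 = q 0 by omega, show (q 1 - q 0) + q 0 = q 1 by omega,
        show ((q 1 - q 0) + (q 2 - q 1)) + q 0 = q 2 by omega,
        show ((q 1 - q 0) + (q 2 - q 1) + (q 3 - q 2)) + q 0 = q 3 by omega]
    rw [hF, aux_shift μ X hXmeas hStat φ hφmeas (q 0) 0 (q 1 - q 0)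
      ((q 1 - q 0) + (q 2 - q 1)) ((q 1 - q 0) + (q 2 - q 1) + (q 3 - q 2))]
  have step5 : ∑ q ∈ Q, F q ≤ n * ∑ v ∈ T, G v := by
    have hrw : ∑ q ∈ Q, F q = ∑ q ∈ Q, G (gp q) := Finset.sum_congr rfl step4
    rw [hrw]
    apply aux_sum_comp_le gp Q T G (fun _ => abs_nonneg _) n
    · intro q hq
      obtain ⟨hqP, hmono⟩ := Finset.mem_filter.mp hq
      rw [hPdef, Fintype.mem_piFinset] at hqP
      have h0 := Finset.mem_Icc.mp (hqP 0)
      have h1 := Finset.mem_Icc.mp (hqP 1)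
      have h2 := Finset.mem_Icc.mp (hqP 2)
      have h3 := Finset.mem_Icc.mp (hqP 3)
      have h01 : q 0 ≤ q 1 := hmono (by decide)
      have h12 : q 1 ≤ q 2 := hmono (by decide)
      have h23 : q 2 ≤ q 3 := hmono (by decide)
      simp only [hTdef, hgpdef, Finset.mem_filter, Finset.mem_product, Finset.mem_range]
      refine ⟨⟨?_, ?_, ?_⟩, ?_⟩ <;> omega
    · intro v
      have hinj : #{q ∈ Q | gp q = v} ≤ #(Finset.Icc 1 n) := by
        apply Finset.card_le_card_of_injOn (fun q => q 0)
        · intro q hq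
          obtain ⟨hqQ, -⟩ := Finset.mem_filter.mp hq
          obtain ⟨hqP, -⟩ := Finset.mem_filter.mp hqQ
          exact Fintype.mem_piFinset.mp hqP 0
        · intro q hq q' hq' h0
          obtain ⟨hqQ, hgq⟩ := Finset.mem_filter.mp hq
          obtain ⟨hq'Q, hgq'⟩ := Finset.mem_filter.mp hq'
          obtain ⟨-, hmono⟩ := Finset.mem_filter.mp hqQ
          obtain ⟨-, hmono'⟩ := Finset.mem_filter.mp hq'Q
          have h01 : q 0 ≤ q 1 := hmono (by decide)
          have h12 : q 1 ≤ q 2 := hmono (by decide)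
          have h23 : q 2 ≤ q 3 := hmono (by decide)
          have h01' : q' 0 ≤ q' 1 := hmono' (by decide)
          have h12' : q' 1 ≤ q' 2 := hmono' (by decide)
          have h23' : q' 2 ≤ q' 3 := hmono' (by decide)
          have hg : gp q = gp q' := hgq.trans hgq'.symm
          have e1 : q 1 - q 0 = q' 1 - q' 0 := congrArg Prod.fst hg
          have e2 : q 2 - q 1 = q' 2 - q' 1 := congrArg (fun v => v.2.1) hg
          have e3 : q 3 - q 2 = q' 3 - q' 2 := congrArg (fun v => v.2.2) hg
          have k0 : q 0 = q' 0 := h0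
          clear h0
          have k1 : q 1 = q' 1 := by omega
          have k2 : q 2 = q' 2 := by omega
          have k3 : q 3 = q' 3 := by omega
          funext i
          fin_cases i <;> assumption
      simpa [Nat.card_Icc] using hinj
  have step6 : ∑ v ∈ T, G v = ∑ i ∈ Finset.range (n + 1), ∑ j ∈ Finset.range (n + 1),
      ∑ k ∈ Finset.range (n + 1),
        (if i + j + k ≤ n then
          |∫ ω, φ (X 0 ω) * φ (X i ω) * φ (X (i + j) ω) * φ (X (i + j + k) ω) ∂μ|
        else 0) := by
    rw [hTdef, Finset.sum_filter, Finset.sum_product]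
    refine Finset.sum_congr rfl fun i _ => ?_
    rw [Finset.sum_product]
  have hsumnonneg : 0 ≤ ∑ v ∈ T, G v :=
    Finset.sum_nonneg fun v _ => abs_nonneg _
  calc ∫ ω, (∑ i ∈ Finset.Icc 1 n, φ (X i ω)) ^ 4 ∂μ
      = ∑ p ∈ P, ∫ ω, ∏ i, φ (X (p i) ω) ∂μ := step1
    _ ≤ ∑ p ∈ P, F p := step2
    _ ≤ 24 * ∑ q ∈ Q, F q := step3
    _ ≤ 24 * (n * ∑ v ∈ T, G v) := by
        refine mul_le_mul_of_nonneg_left step5 (by norm_num)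
    _ = 24 * n * ∑ v ∈ T, G v := by ring
    _ = (24 : ℝ) * n * ∑ i ∈ Finset.range (n + 1), ∑ j ∈ Finset.range (n + 1),
        ∑ k ∈ Finset.range (n + 1),
          (if i + j + k ≤ n then
            |∫ ω, φ (X 0 ω) * φ (X i ω) * φ (X (i + j) ω) * φ (X (i + j + k) ω) ∂μ|
          else 0) := by rw [step6]
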